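/- arXiv:2310.18036 — 2 statements merged into one kernel-verified Lean document; each statement's English description precedes it below -/
import Mathlib

section
/- Let v be a node in a 2-cut STT T with parent p and grandparent g. Then at least one of the splay steps at v, at p, or at g can be executed while preserving the 2-cut property. -/
open SimpleGraph

variable {V : Type*}

/-- Reachability within a vertex set `S`. -/
def reachIn (G : SimpleGraph V) (S : Set V) : V → V → Prop :=
  Relation.ReflTransGen (fun x y => x ∈ S ∧ y ∈ S ∧ G.Adj x y)

/-- The connected component of `v` inside the vertex set `S`. -/
def compIn (G : SimpleGraph V) (S : Set V) (v : V) : Set V :=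
  {u | reachIn G S v u}

/-- `IsSearchTree G par S r`: the parent map `par` describes a search tree with root `r`
on the part of `G` induced by `S`, built recursively: the root `r` is chosen, and each
connected component of `S \ {r}` carries a search tree whose root is a child of `r`. -/
inductive IsSearchTree (G : SimpleGraph V) (par : V → Option V) : Set V → V → Prop where
  | node (S : Set V) (r : V) (ρ : V → V) (hr : r ∈ S)
      (hρ : ∀ v ∈ S, v ≠ r → par (ρ v) = some r)
      (h : ∀ v ∈ S, v ≠ r → IsSearchTree G par (compIn G (S \ {r}) v) (ρ v)) :
      IsSearchTree G par S r

/-- `isAnc par a v`: `a` is an ancestor of `v` (reflexively). -/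
def isAnc (par : V → Option V) (a v : V) : Prop :=
  Relation.ReflTransGen (fun x y => par x = some y) v a

/-- The subtree rooted at `v`: all descendants of `v` (including `v`). -/
def subtree (par : V → Option V) (v : V) : Set V := {u | isAnc par v u}

/-- The outer boundary `∂(T_v)` of the subtree rooted at `v`. -/
def bdry (G : SimpleGraph V) (par : V → Option V) (v : V) : Set V :=
  {x | x ∉ subtree par v ∧ ∃ u ∈ subtree par v, G.Adj x u}

/-- A search tree is 2-cut if every subtree boundary has size at most 2. -/
def TwoCut (G : SimpleGraph V) (par : V → Option V) : Prop :=
  ∀ v, (bdry G par v).ncard ≤ 2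

open Classical in
/-- The STT rotation of `v` with its parent `p`: `p` becomes a child of `v`, `v` takes the
former parent of `p`, and any child `c` of `v` with `p ∈ ∂(T_c)` is reattached to `p`. -/
noncomputable def rotate (G : SimpleGraph V) (par : V → Option V) (v p : V) :
    V → Option V := fun x =>
  if x = v then par p
  else if x = p then some v
  else if par x = some v ∧ p ∈ bdry G par x then some p
  else par x

/-- A splay step at `x`: a single rotation if `x` has no grandparent; a ZIG-ZAG
(two rotations at `x`) if `x` is a separator; a ZIG-ZIG (rotation at the parent,
then at `x`) otherwise. -/
noncomputable def splayStep (G : SimpleGraph V) (par : V → Option V) (x : V) :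
    V → Option V :=
  match par x with
  | none => par
  | some p =>
    match par p with
    | none => rotate G par x p
    | some g =>
      if (bdry G par x).ncard = 2 then
        rotate G (rotate G par x p) x g
      else
        rotate G (rotate G par p g) x p

section Basics

variable {G : SimpleGraph V} {par : V → Option V} {S : Set V} {a b c : V}

/-! ### reachIn / compIn -/

lemma reachIn.refl : reachIn G S a a := Relation.ReflTransGen.refl

lemma reachIn.symm (h : reachIn G S a b) : reachIn G S b a :=
  by
    induction h with
    | refl => exact Relation.ReflTransGen.refl
    | tail _ hs ih => exact Relation.ReflTransGen.head ⟨hs.2.1, hs.1, hs.2.2.symm⟩ ih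

lemma reachIn.trans (h : reachIn G S a b) (h' : reachIn G S b c) : reachIn G S a c :=
  Relation.ReflTransGen.trans h h'

lemma reachIn.mono {S' : Set V} (hss : S ⊆ S') (h : reachIn G S a b) : reachIn G S' a b :=
  by
    induction h with
    | refl => exact Relation.ReflTransGen.refl
    | tail _ hs ih => exact Relation.ReflTransGen.tail ih ⟨hss hs.1, hss hs.2.1, hs.2.2⟩

lemma mem_compIn_self : a ∈ compIn G S a := reachIn.refl

lemma compIn_subset : compIn G S a ⊆ insert a S := by
  intro u hu
  rcases (Relation.ReflTransGen.cases_tail hu) with h | ⟨c, _, hc⟩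
  · exact h ▸ Set.mem_insert _ _
  · exact Set.mem_insert_of_mem _ hc.2.1

lemma compIn_subset' (ha : a ∈ S) : compIn G S a ⊆ S := by
  intro u hu
  rcases compIn_subset hu with h | h
  · exact h ▸ ha
  · exact h

lemma compIn_eq_of_mem (h : b ∈ compIn G S a) : compIn G S a = compIn G S b := by
  ext u
  exact ⟨fun hu => reachIn.trans (reachIn.symm h) hu, fun hu => reachIn.trans h hu⟩

lemma reachIn_compIn (h : reachIn G S a b) : reachIn G (compIn G S a) a b := by
  induction h with
  | refl => exact reachIn.refl
  | tail hac hcb ih =>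
      exact Relation.ReflTransGen.tail ih ⟨hac, Relation.ReflTransGen.tail hac hcb, hcb.2.2⟩

lemma compIn_mono {S' : Set V} (hss : S ⊆ S') : compIn G S a ⊆ compIn G S' a :=
  fun _ hu => reachIn.mono hss hu

lemma reachIn_univ_of_reachable (h : G.Reachable a b) : reachIn G Set.univ a b := by
  obtain ⟨w⟩ := h
  induction w with
  | nil => exact reachIn.refl
  | cons h _ ih => exact Relation.ReflTransGen.head ⟨trivial, trivial, h⟩ ih

/-! ### subtree -/

lemma mem_subtree_self : a ∈ subtree par a := Relation.ReflTransGen.refl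

lemma mem_subtree_of_par {u w x : V} (h : par u = some w) (hw : w ∈ subtree par x) :
    u ∈ subtree par x := Relation.ReflTransGen.head h hw

lemma mem_subtree_cases {u x : V} (h : u ∈ subtree par x) :
    u = x ∨ ∃ w, par u = some w ∧ w ∈ subtree par x := Relation.ReflTransGen.cases_head h

lemma subtree_trans {u w x : V} (h : u ∈ subtree par w) (h' : w ∈ subtree par x) :
    u ∈ subtree par x := Relation.ReflTransGen.trans h h'

/-- chains with an explicit length, for strong induction -/
def chainLen (par : V → Option V) : ℕ → V → V → Prop
  | 0 => fun x y => x = y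
  | n+1 => fun x y => ∃ w, par x = some w ∧ chainLen par n w y

lemma chainLen_subtree {n : ℕ} : ∀ {u x : V}, chainLen par n u x → u ∈ subtree par x := by
  induction n with
  | zero => intro u x h; exact h ▸ mem_subtree_self
  | succ n ih => rintro u x ⟨w, hw, hc⟩; exact mem_subtree_of_par hw (ih hc)

lemma subtree_chainLen {u x : V} (h : u ∈ subtree par x) : ∃ n, chainLen par n u x := by
  induction h using Relation.ReflTransGen.head_induction_on with
  | refl => exact ⟨0, rfl⟩
  | head h _ ih => obtain ⟨n, hn⟩ := ih; exact ⟨n+1, _, h, hn⟩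

end Basics

section GoodSec

variable {G : SimpleGraph V} {par : V → Option V} {r : V}

/-- iterated parent function -/
def parF (par : V → Option V) : V → V := fun z => (par z).getD z

lemma parF_eq {x y : V} (h : par x = some y) : parF par x = y := by simp [parF, h]

lemma parF_eq_none {x : V} (h : par x = none) : parF par x = x := by simp [parF, h]

lemma chainLen_iterate {n : ℕ} : ∀ {u x : V}, chainLen par n u x → (parF par)^[n] u = x := by
  induction n with
  | zero => intro u x h; exact h
  | succ n ih =>
      rintro u x ⟨w, hw, hc⟩
      rw [Function.iterate_succ_apply, parF_eq hw]
      exact ih hc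

lemma iterate_root {n : ℕ} (h : par r = none) : (parF par)^[n] r = r := by
  induction n with
  | zero => rfl
  | succ n ih => rw [Function.iterate_succ_apply, parF_eq_none h, ih]

/-- The global structural facts about a search tree's parent map that we need. -/
structure GoodPar (G : SimpleGraph V) (par : V → Option V) (r : V) : Prop where
  root_none : par r = none
  sub_root : subtree par r = Set.univ
  sub_eq : ∀ ⦃x y : V⦄, par x = some y → subtree par x = compIn G (subtree par y \ {y}) x

namespace GoodPar

variable (hg : GoodPar G par r)
include hg

lemma toRoot (x : V) : x ∈ subtree par r := hg.sub_root ▸ Set.mem_univ x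

lemma loop_root {a : V} {l : ℕ} (hl : l ≠ 0) (h : (parF par)^[l] a = a) : a = r := by
  obtain ⟨k, hk⟩ := subtree_chainLen (hg.toRoot a)
  have hk' := chainLen_iterate hk
  have hloop : ∀ q, (parF par)^[l * q] a = a := by
    intro q
    induction q with
    | zero => rfl
    | succ q ih =>
        rw [Nat.mul_succ, Function.iterate_add_apply, h, ih]
  have hge : k ≤ l * k := Nat.le_mul_of_pos_left k (Nat.pos_of_ne_zero hl)
  have hr : (parF par)^[l * k] a = r := by
    have hc : l * k - k + k = l * k := Nat.sub_add_cancel hge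
    rw [← hc, Function.iterate_add_apply, hk', iterate_root hg.root_none]
  rw [hloop k] at hr
  exact hr

lemma anc_antisymm {a b : V} (hab : a ∈ subtree par b) (hba : b ∈ subtree par a) : a = b := by
  obtain ⟨n, hn⟩ := subtree_chainLen hab
  obtain ⟨m, hm⟩ := subtree_chainLen hba
  match n, hn with
  | 0, hn => exact hn
  | (n+1), hn =>
      have h1 := chainLen_iterate hn
      have h2 := chainLen_iterate hm
      have hloop : (parF par)^[m + (n+1)] a = a := by
        rw [Function.iterate_add_apply, h1, h2]
      have har : a = r := hg.loop_root (by omega) hloop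
      subst har
      rw [iterate_root hg.root_none] at h1
      exact h1

lemma no_self {x : V} : par x ≠ some x := by
  intro hx
  have h1 : x = r :=
    hg.loop_root (l := 1) one_ne_zero (by simp [parF_eq hx])
  rw [h1, hg.root_none] at hx
  exact Option.some_ne_none _ hx.symm

lemma root_eq {x : V} (h : par x = none) : x = r := by
  rcases mem_subtree_cases (hg.toRoot x) with h' | ⟨w, hw, _⟩
  · exact h'
  · rw [h] at hw; exact absurd hw.symm (Option.some_ne_none _)

lemma par_not_mem_subtree {x y : V} (h : par x = some y) : y ∉ subtree par x := by
  intro hy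
  have hx : x ∈ subtree par y := mem_subtree_of_par h mem_subtree_self
  have := hg.anc_antisymm hx hy
  exact hg.no_self (this ▸ h)

lemma subtree_subset {x y : V} (h : par x = some y) :
    subtree par x ⊆ subtree par y \ {y} := by
  intro u hu
  refine ⟨subtree_trans hu (mem_subtree_of_par h mem_subtree_self), ?_⟩
  intro he
  exact hg.par_not_mem_subtree h (he ▸ hu)

lemma mem_subtree_parent {x y : V} (h : par x = some y) : x ∈ subtree par y \ {y} :=
  hg.subtree_subset h mem_subtree_self

omit hg

lemma comparable {u x y : V} (hx : u ∈ subtree par x) (hy : u ∈ subtree par y) :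
    x ∈ subtree par y ∨ y ∈ subtree par x := by
  induction hx using Relation.ReflTransGen.head_induction_on with
  | refl => exact Or.inl hy
  | head h hwx ih =>
      rename_i u' w
      rcases mem_subtree_cases hy with h' | ⟨w', hw', hmem⟩
      · exact Or.inr (h' ▸ Relation.ReflTransGen.head h hwx)
      · rw [h] at hw'
        exact ih (Option.some_inj.mp hw' ▸ hmem)

include hg

lemma sibling_disjoint {c₁ c₂ d u : V} (h1 : par c₁ = some d) (h2 : par c₂ = some d)
    (hne : c₁ ≠ c₂) (hu1 : u ∈ subtree par c₁) : u ∉ subtree par c₂ := by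
  intro hu2
  rcases comparable hu1 hu2 with h | h
  · rcases mem_subtree_cases h with h' | ⟨w, hw, hmem⟩
    · exact hne h'
    · rw [h1] at hw
      exact hg.par_not_mem_subtree h2 (Option.some_inj.mp hw ▸ hmem)
  · rcases mem_subtree_cases h with h' | ⟨w, hw, hmem⟩
    · exact hne h'.symm
    · rw [h2] at hw
      exact hg.par_not_mem_subtree h1 (Option.some_inj.mp hw ▸ hmem)

lemma conn (hpc : G.Preconnected) {x u : V} (hu : u ∈ subtree par x) :
    reachIn G (subtree par x) x u := by
  cases hpar : par x with
  | none =>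
      have : x = r := hg.root_eq hpar
      subst this
      rw [hg.sub_root]
      exact reachIn_univ_of_reachable (hpc x u)
  | some y =>
      rw [hg.sub_eq hpar] at hu ⊢
      exact reachIn_compIn hu

omit hg

lemma reachIn_mem_right {S : Set V} {a b : V} (h : reachIn G S a b) (ha : a ∈ S) : b ∈ S := by
  rcases Relation.ReflTransGen.cases_tail h with h | ⟨c, _, hc⟩
  · exact h ▸ ha
  · exact hc.2.1

lemma reach_last {S : Set V} {a b : V} (h : reachIn G S a b) :
    b = a ∨ ∃ w, G.Adj a w ∧ w ∈ S ∧ reachIn G (S \ {a}) w b := by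
  induction h with
  | refl => exact Or.inl rfl
  | tail hac hcb ih =>
      rename_i c b
      by_cases hba : b = a
      · exact Or.inl hba
      · rcases ih with h' | ⟨w, haw, hwS, hreach⟩
        · subst h'
          exact Or.inr ⟨b, hcb.2.2, hcb.2.1, Relation.ReflTransGen.refl⟩
        · refine Or.inr ⟨w, haw, hwS, Relation.ReflTransGen.tail hreach ?_⟩
          exact ⟨reachIn_mem_right hreach ⟨hwS, haw.ne'⟩, ⟨hcb.2.1, hba⟩, hcb.2.2⟩

include hg

lemma adj_child (hpc : G.Preconnected) {c d : V} (h : par c = some d) :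
    ∃ w ∈ subtree par c, G.Adj d w := by
  have hcd : c ∈ subtree par d := mem_subtree_of_par h mem_subtree_self
  have hreach := hg.conn hpc hcd
  rcases reach_last hreach with h' | ⟨w, haw, hwS, hreach'⟩
  · exact absurd (h' ▸ h) hg.no_self
  · refine ⟨w, ?_, haw⟩
    rw [hg.sub_eq h]
    exact reachIn.symm hreach'

lemma par_mem_bdry (hpc : G.Preconnected) {c d : V} (h : par c = some d) :
    d ∈ bdry G par c := by
  obtain ⟨w, hw, hadj⟩ := hg.adj_child hpc h
  exact ⟨hg.par_not_mem_subtree h, w, hw, hadj⟩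

lemma bdry_mono {x y : V} (h : par x = some y) :
    bdry G par x ⊆ insert y (bdry G par y) := by
  rintro z ⟨hz, u, hu, hadj⟩
  by_cases hzy : z = y
  · exact hzy ▸ Set.mem_insert _ _
  by_cases hzT : z ∈ subtree par y
  · exfalso
    apply hz
    rw [hg.sub_eq h] at hu ⊢
    exact Relation.ReflTransGen.tail hu ⟨compIn_subset' (hg.mem_subtree_parent h) hu, ⟨hzT, hzy⟩, hadj.symm⟩
  · exact Set.mem_insert_of_mem _ ⟨hzT, u, hg.subtree_subset h hu |>.1, hadj⟩

omit hg

lemma children_cover {u x : V} (hu : u ∈ subtree par x) (hne : u ≠ x) :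
    ∃ c, par c = some x ∧ u ∈ subtree par c := by
  rcases Relation.ReflTransGen.cases_tail hu with h | ⟨c, hc, hstep⟩
  · exact absurd h.symm hne
  · exact ⟨c, hstep, hc⟩

end GoodPar

end GoodSec

section ISTSec

variable {G : SimpleGraph V} {par : V → Option V}

lemma compIn_disjoint {S : Set V} {u v z : V} (hu : u ∉ compIn G S v)
    (hz1 : z ∈ compIn G S u) (hz2 : z ∈ compIn G S v) : False :=
  hu (reachIn.trans hz2 (reachIn.symm hz1))

lemma IsSearchTree.root_mem {S : Set V} {r : V} (hT : IsSearchTree G par S r) : r ∈ S := by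
  cases hT; assumption

lemma IsSearchTree.par_mem' {S : Set V} {r : V} (hT : IsSearchTree G par S r) :
    ∀ x ∈ S, x ≠ r → ∀ y, par x = some y →
      (y = r ∨ y ∈ compIn G (S \ {r}) x) := by
  induction hT with
  | node S r ρ hr hρ h ih =>
      intro x hx hxr y hy
      by_cases hxρ : x = ρ x
      · left
        rw [hxρ, hρ x hx hxr] at hy
        exact (Option.some_inj.mp hy).symm
      · right
        have hxC : x ∈ compIn G (S \ {r}) x := mem_compIn_self
        rcases ih x hx hxr x hxC hxρ y hy with h' | h'
        · exact h' ▸ (h x hx hxr).root_mem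
        · have hxm : x ∈ compIn G (S \ {r}) x \ {ρ x} := ⟨hxC, hxρ⟩
          exact (compIn_subset' hxm).trans Set.diff_subset h'

lemma IsSearchTree.main {S : Set V} {r : V} (hT : IsSearchTree G par S r)
    (hc1 : ∀ u y, u ∉ S → par u = some y → y ∉ S)
    (hc2 : ∀ y, par r = some y → y ∉ S) :
    subtree par r = S ∧
      (∀ x ∈ S, x ≠ r → ∀ y, par x = some y →
        subtree par x = compIn G (subtree par y \ {y}) x) := by
  induction hT with
  | node S r ρ hr hρ h ih =>
      -- closure conditions for the components
      have hCsub : ∀ v ∈ S, v ≠ r → compIn G (S \ {r}) v ⊆ S \ {r} := by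
        intro v hv hvr
        exact compIn_subset' ⟨hv, hvr⟩
      have hcc1 : ∀ v ∈ S, v ≠ r → ∀ u y, u ∉ compIn G (S \ {r}) v → par u = some y →
          y ∉ compIn G (S \ {r}) v := by
        intro v hv hvr u y hu hy hyC
        have hyS : y ∈ S \ {r} := hCsub v hv hvr hyC
        by_cases huS : u ∈ S
        · by_cases hur : u = r
          · exact hc2 y (hur ▸ hy) hyS.1
          · rcases (IsSearchTree.node S r ρ hr hρ h).par_mem' u huS hur y hy with h' | h'
            · exact hyS.2 h'
            · exact compIn_disjoint hu h' hyC
        · exact hc1 u y huS hy hyS.1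
      have hcc2 : ∀ v ∈ S, v ≠ r → ∀ y, par (ρ v) = some y → y ∉ compIn G (S \ {r}) v := by
        intro v hv hvr y hy hyC
        rw [hρ v hv hvr] at hy
        exact (hCsub v hv hvr hyC).2 (Option.some_inj.mp hy).symm
      have ih' : ∀ v ∈ S, ∀ hvr : v ≠ r,
          subtree par (ρ v) = compIn G (S \ {r}) v ∧
          (∀ x ∈ compIn G (S \ {r}) v, x ≠ ρ v → ∀ y, par x = some y →
            subtree par x = compIn G (subtree par y \ {y}) x) := by
        intro v hv hvr
        exact ih v hv hvr (hcc1 v hv hvr) (hcc2 v hv hvr)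
      have hsubr : subtree par r = S := by
        apply Set.eq_of_subset_of_subset
        · intro u hu
          induction hu using Relation.ReflTransGen.head_induction_on with
          | refl => exact hr
          | head hstep _ ihm =>
              rename_i u' w _
              by_contra huS
              exact hc1 u' w huS hstep ihm
        · intro x hx
          by_cases hxr : x = r
          · exact hxr ▸ mem_subtree_self
          · have h1 := (ih' x hx hxr).1
            have hx1 : x ∈ subtree par (ρ x) := h1 ▸ mem_compIn_self
            exact subtree_trans hx1 (mem_subtree_of_par (hρ x hx hxr) mem_subtree_self)
      refine ⟨hsubr, ?_⟩
      intro x hx hxr y hy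
      by_cases hxρ : x = ρ x
      · have hyr : y = r := by
          rw [hxρ, hρ x hx hxr] at hy
          exact (Option.some_inj.mp hy).symm
        subst hyr
        rw [hsubr, ← (ih' x hx hxr).1, ← hxρ]
      · exact (ih' x hx hxr).2 x mem_compIn_self hxρ y hy

lemma goodPar_of_isSearchTree {r : V} (hroot : par r = none)
    (hT : IsSearchTree G par Set.univ r) : GoodPar G par r := by
  have hmain := hT.main
    (fun u y hu _ => absurd (Set.mem_univ u) hu)
    (fun y hy => by rw [hroot] at hy; exact absurd hy.symm (Option.some_ne_none _))
  refine ⟨hroot, hmain.1, ?_⟩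
  intro x y hy
  have hxr : x ≠ r := fun h => by rw [h, hroot] at hy; exact Option.some_ne_none _ hy.symm
  exact hmain.2 x (Set.mem_univ x) hxr y hy

end ISTSec

section RotSec

variable {G : SimpleGraph V} {par : V → Option V} {r v p : V}

lemma rotate_v : rotate G par v p v = par p := by
  unfold rotate; rw [if_pos rfl]

lemma rotate_p (h : p ≠ v) : rotate G par v p p = some v := by
  unfold rotate; rw [if_neg h, if_pos rfl]

lemma rotate_moved {c : V} (h1 : c ≠ v) (h2 : c ≠ p)
    (h3 : par c = some v ∧ p ∈ bdry G par c) : rotate G par v p c = some p := by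
  unfold rotate; rw [if_neg h1, if_neg h2, if_pos h3]

lemma rotate_other {c : V} (h1 : c ≠ v) (h2 : c ≠ p)
    (h3 : ¬(par c = some v ∧ p ∈ bdry G par c)) : rotate G par v p c = par c := by
  unfold rotate; rw [if_neg h1, if_neg h2, if_neg h3]

variable (hg : GoodPar G par r) (hvp : par v = some p)
include hg hvp

lemma vne : v ≠ p := fun h => hg.no_self (h ▸ hvp)

lemma par_p_ne : par p ≠ some v := by
  intro h
  have h1 : v ∈ subtree par p := mem_subtree_of_par hvp mem_subtree_self
  have h2 : p ∈ subtree par v := mem_subtree_of_par h mem_subtree_self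
  exact hg.no_self ((hg.anc_antisymm h1 h2) ▸ hvp)

/-- subtrees of vertices other than `v, p` are unchanged by the rotation -/
lemma subtree_rotate_other {x : V} (hxv : x ≠ v) (hxp : x ≠ p) :
    subtree (rotate G par v p) x = subtree par x := by
  have hvne := vne hg hvp
  ext u
  constructor
  · -- new → old
    intro hu
    obtain ⟨n, hn⟩ := subtree_chainLen hu
    clear hu
    induction n using Nat.strong_induction_on generalizing u with
    | _ n ih =>
      by_cases huv : u = v
      · rw [huv] at hn ⊢
        match n, hn with
        | 0, hn => exact absurd hn.symm hxv
        | (m+1), ⟨w, hw, hc⟩ =>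
          rw [rotate_v] at hw
          exact mem_subtree_of_par hvp
            (mem_subtree_of_par hw (ih m (Nat.lt_succ_self m) w hc))
      · by_cases hup : u = p
        · rw [hup] at hn ⊢
          match n, hn with
          | 0, hn => exact absurd hn.symm hxp
          | (m+1), ⟨w, hw, hc⟩ =>
            rw [rotate_p hvne.symm] at hw
            have hww : v = w := by injection hw
            have hvx := ih m (Nat.lt_succ_self m) w hc
            rw [← hww] at hvx
            rcases mem_subtree_cases hvx with h | ⟨w', hw', hmem⟩
            · exact absurd h.symm hxv
            · rw [hvp] at hw'
              have hpw : p = w' := by injection hw'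
              exact hpw ▸ hmem
        · match n, hn with
          | 0, hn => exact hn ▸ mem_subtree_self
          | (m+1), ⟨w, hw, hc⟩ =>
            have hwx := ih m (Nat.lt_succ_self m) w hc
            by_cases hmv : par u = some v ∧ p ∈ bdry G par u
            · rw [rotate_moved huv hup hmv] at hw
              have hww : p = w := by injection hw
              rw [← hww] at hwx
              exact mem_subtree_of_par hmv.1 (mem_subtree_of_par hvp hwx)
            · rw [rotate_other huv hup hmv] at hw
              exact mem_subtree_of_par hw hwx
  · -- old → new
    intro hu
    obtain ⟨n, hn⟩ := subtree_chainLen hu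
    clear hu
    induction n using Nat.strong_induction_on generalizing u with
    | _ n ih =>
      by_cases huv : u = v
      · rw [huv] at hn ⊢
        match n, hn with
        | 0, hn => exact absurd hn.symm hxv
        | (m+1), ⟨w, hw, hc⟩ =>
          have hww : p = w := by rw [hvp] at hw; injection hw
          rw [← hww] at hc
          match m, hc with
          | 0, hc => exact absurd hc.symm hxp
          | (k+1), ⟨w', hw', hc'⟩ =>
            have h1 := ih k (by omega) w' hc'
            exact mem_subtree_of_par
              (show rotate G par v p v = some w' by rw [rotate_v, hw']) h1
      · by_cases hup : u = p
        · rw [hup] at hn ⊢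
          match n, hn with
          | 0, hn => exact absurd hn.symm hxp
          | (m+1), ⟨w, hw, hc⟩ =>
            have hwx := ih m (Nat.lt_succ_self m) w hc
            exact mem_subtree_of_par (rotate_p hvne.symm)
              (mem_subtree_of_par
                (show rotate G par v p v = some w by rw [rotate_v, hw]) hwx)
        · match n, hn with
          | 0, hn => exact hn ▸ mem_subtree_self
          | (m+1), ⟨w, hw, hc⟩ =>
            by_cases hmv : par u = some v ∧ p ∈ bdry G par u
            · have hww : v = w := by rw [hmv.1] at hw; injection hw
              rw [← hww] at hc
              match m, hc with
              | 0, hc => exact absurd hc.symm hxv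
              | (k+1), ⟨w', hw', hc'⟩ =>
                have hww' : p = w' := by rw [hvp] at hw'; injection hw'
                rw [← hww'] at hc'
                exact mem_subtree_of_par (rotate_moved huv hup hmv)
                  (ih k (by omega) p hc')
            · exact mem_subtree_of_par
                (show rotate G par v p u = some w by
                  rw [rotate_other huv hup hmv]; exact hw)
                (ih m (Nat.lt_succ_self m) w hc)

end RotSec

section RotSec2

variable {G : SimpleGraph V} {par : V → Option V} {r v p : V}
variable (hg : GoodPar G par r) (hvp : par v = some p)
include hg hvp

/-- after rotation, the subtree of `v` is the old subtree of `p`. -/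
lemma subtree_rotate_v_eq : subtree (rotate G par v p) v = subtree par p := by
  have hvne := vne hg hvp
  ext u
  constructor
  · intro hu
    obtain ⟨n, hn⟩ := subtree_chainLen hu
    clear hu
    induction n using Nat.strong_induction_on generalizing u with
    | _ n ih =>
      by_cases huv : u = v
      · rw [huv]; exact mem_subtree_of_par hvp mem_subtree_self
      · by_cases hup : u = p
        · rw [hup]; exact mem_subtree_self
        · by_cases hmv : par u = some v ∧ p ∈ bdry G par u
          · exact mem_subtree_of_par hmv.1 (mem_subtree_of_par hvp mem_subtree_self)
          · match n, hn with
            | 0, hn => exact absurd hn huv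
            | (m+1), ⟨w, hw, hc⟩ =>
              rw [rotate_other huv hup hmv] at hw
              exact mem_subtree_of_par hw (ih m (Nat.lt_succ_self m) w hc)
  · intro hu
    obtain ⟨n, hn⟩ := subtree_chainLen hu
    clear hu
    induction n using Nat.strong_induction_on generalizing u with
    | _ n ih =>
      by_cases huv : u = v
      · rw [huv]; exact mem_subtree_self
      · by_cases hup : u = p
        · rw [hup]; exact mem_subtree_of_par (rotate_p hvne.symm) mem_subtree_self
        · by_cases hmv : par u = some v ∧ p ∈ bdry G par u
          · exact mem_subtree_of_par (rotate_moved huv hup hmv)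
              (mem_subtree_of_par (rotate_p hvne.symm) mem_subtree_self)
          · match n, hn with
            | 0, hn => exact absurd hn hup
            | (m+1), ⟨w, hw, hc⟩ =>
              exact mem_subtree_of_par
                (show rotate G par v p u = some w by
                  rw [rotate_other huv hup hmv]; exact hw)
                (ih m (Nat.lt_succ_self m) w hc)

/-- the description of the subtree of `p` after rotation. -/
lemma mem_subtree_rotate_p_iff {u : V} :
    u ∈ subtree (rotate G par v p) p ↔
      (u ∈ subtree par p ∧ u ∉ subtree par v) ∨
        ∃ c, par c = some v ∧ p ∈ bdry G par c ∧ u ∈ subtree par c := by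
  have hvne := vne hg hvp
  have hrhs_sub : ∀ z : V,
      ((z ∈ subtree par p ∧ z ∉ subtree par v) ∨
        ∃ c, par c = some v ∧ p ∈ bdry G par c ∧ z ∈ subtree par c) →
      z ∈ subtree par p := by
    rintro z (⟨h1, _⟩ | ⟨c, hc1, _, hz⟩)
    · exact h1
    · exact subtree_trans hz
        (mem_subtree_of_par hc1 (mem_subtree_of_par hvp mem_subtree_self))
  constructor
  · intro hu
    obtain ⟨n, hn⟩ := subtree_chainLen hu
    clear hu
    induction n using Nat.strong_induction_on generalizing u with
    | _ n ih =>
      by_cases hup : u = p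
      · rw [hup]; exact Or.inl ⟨mem_subtree_self, hg.par_not_mem_subtree hvp⟩
      · by_cases huv : u = v
        · exfalso
          rw [huv] at hn
          match n, hn with
          | 0, hn => exact hvne hn
          | (m+1), ⟨w, hw, hc⟩ =>
            rw [rotate_v] at hw
            have hw' := hrhs_sub w (ih m (Nat.lt_succ_self m) hc)
            exact hg.par_not_mem_subtree hw hw'
        · by_cases hmv : par u = some v ∧ p ∈ bdry G par u
          · exact Or.inr ⟨u, hmv.1, hmv.2, mem_subtree_self⟩
          · match n, hn with
            | 0, hn => exact absurd hn hup
            | (m+1), ⟨w, hw, hc⟩ =>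
              rw [rotate_other huv hup hmv] at hw
              rcases ih m (Nat.lt_succ_self m) hc with ⟨hw1, hw2⟩ | ⟨c, hc1, hc2, hz⟩
              · refine Or.inl ⟨mem_subtree_of_par hw hw1, ?_⟩
                intro huT
                rcases mem_subtree_cases huT with h | ⟨w', hw', hmem⟩
                · exact huv h
                · rw [hw] at hw'
                  exact hw2 ((Option.some_inj.mp hw') ▸ hmem)
              · exact Or.inr ⟨c, hc1, hc2, mem_subtree_of_par hw hz⟩
  · rintro (⟨hu1, hu2⟩ | ⟨c, hc1, hc2, hz⟩)
    · -- u ∈ T p \ T v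
      obtain ⟨n, hn⟩ := subtree_chainLen hu1
      clear hu1
      induction n using Nat.strong_induction_on generalizing u with
      | _ n ih =>
        by_cases hup : u = p
        · rw [hup]; exact mem_subtree_self
        · have huv : u ≠ v := fun h => hu2 (h ▸ mem_subtree_self)
          have hunm : ¬(par u = some v ∧ p ∈ bdry G par u) := by
            rintro ⟨h1, _⟩
            exact hu2 (mem_subtree_of_par h1 mem_subtree_self)
          match n, hn with
          | 0, hn => exact absurd hn hup
          | (m+1), ⟨w, hw, hc⟩ =>
            have hwv : w ∉ subtree par v := fun h => hu2 (mem_subtree_of_par hw h)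
            exact mem_subtree_of_par
              (show rotate G par v p u = some w by
                rw [rotate_other huv hup hunm]; exact hw)
              (ih m (Nat.lt_succ_self m) hwv hc)
    · -- u in a moved subtree
      have hcv : c ≠ v := fun h => hg.no_self (h ▸ hc1)
      have hcp : c ≠ p := fun h => par_p_ne hg hvp (h ▸ hc1)
      have hvnc : v ∉ subtree par c := hg.par_not_mem_subtree hc1
      have hpnc : p ∉ subtree par c := hc2.1
      obtain ⟨n, hn⟩ := subtree_chainLen hz
      clear hz
      induction n using Nat.strong_induction_on generalizing u with
      | _ n ih =>
        by_cases huc : u = c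
        · rw [huc]; exact mem_subtree_of_par (rotate_moved hcv hcp ⟨hc1, hc2⟩)
            mem_subtree_self
        · match n, hn with
          | 0, hn => exact absurd hn huc
          | (m+1), ⟨w, hw, hc'⟩ =>
            have huT : u ∈ subtree par c :=
              chainLen_subtree (n := m+1) ⟨w, hw, hc'⟩
            have huv : u ≠ v := fun h => hvnc (h ▸ huT)
            have hup : u ≠ p := fun h => hpnc (h ▸ huT)
            have hunm : ¬(par u = some v ∧ p ∈ bdry G par u) := by
              rintro ⟨h1, _⟩
              rw [h1] at hw
              exact hvnc ((Option.some_inj.mp hw) ▸ chainLen_subtree hc')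
            exact mem_subtree_of_par
              (show rotate G par v p u = some w by
                rw [rotate_other huv hup hunm]; exact hw)
              (ih m (Nat.lt_succ_self m) hc')

/-- the new subtree of `p` is contained in the old one -/
lemma subtree_rotate_p_subset :
    subtree (rotate G par v p) p ⊆ subtree par p := by
  intro z hz
  rcases (mem_subtree_rotate_p_iff hg hvp).mp hz with ⟨h1, _⟩ | ⟨c, hc1, _, hzc⟩
  · exact h1
  · exact subtree_trans hzc
      (mem_subtree_of_par hc1 (mem_subtree_of_par hvp mem_subtree_self))

lemma v_not_mem_subtree_rotate_p : v ∉ subtree (rotate G par v p) p := by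
  intro hv
  rcases (mem_subtree_rotate_p_iff hg hvp).mp hv with ⟨_, h2⟩ | ⟨c, hc1, _, hzc⟩
  · exact h2 mem_subtree_self
  · exact hg.par_not_mem_subtree hc1 hzc

end RotSec2

section RotSec3

variable {G : SimpleGraph V} {par : V → Option V} {r v p : V}

lemma bdry_congr {par' : V → Option V} {x : V}
    (h : subtree par x = subtree par' x) : bdry G par x = bdry G par' x := by
  unfold bdry; rw [h]

variable (hg : GoodPar G par r) (hvp : par v = some p) (hconn : G.Preconnected)
include hg hvp hconn

/-- the new subtree of `p` is the connected component of `p` in `T_p \ {v}`. -/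
lemma subtree_rotate_p_eq_comp :
    subtree (rotate G par v p) p = compIn G (subtree par p \ {v}) p := by
  have hvne := vne hg hvp
  have hpmem : p ∈ subtree par p \ {v} := ⟨mem_subtree_self, fun h => hvne h.symm⟩
  apply Set.eq_of_subset_of_subset
  · intro u hu
    rcases (mem_subtree_rotate_p_iff hg hvp).mp hu with ⟨h1, h2⟩ | ⟨c, hc1, hc2, hzc⟩
    · by_cases hup : u = p
      · rw [hup]; exact reachIn.refl
      · obtain ⟨c', hc'p, huc'⟩ := GoodPar.children_cover h1 hup
        have hc'v : c' ≠ v := fun h => h2 (h ▸ huc')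
        have hvnc' : v ∉ subtree par c' :=
          hg.sibling_disjoint hvp hc'p hc'v.symm mem_subtree_self
        have hsub : subtree par c' ⊆ subtree par p \ {v} := by
          intro z hz
          exact ⟨subtree_trans hz (mem_subtree_of_par hc'p mem_subtree_self),
            fun he => hvnc' (he ▸ hz)⟩
        obtain ⟨w, hwc', hadj⟩ := hg.adj_child hconn hc'p
        have hreach : reachIn G (subtree par c') w u :=
          reachIn.trans (reachIn.symm (hg.conn hconn hwc')) (hg.conn hconn huc')
        exact Relation.ReflTransGen.head ⟨hpmem, hsub hwc', hadj⟩ (reachIn.mono hsub hreach)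
    · have hvnc : v ∉ subtree par c := hg.par_not_mem_subtree hc1
      have hsub : subtree par c ⊆ subtree par p \ {v} := by
        intro z hz
        refine ⟨subtree_trans hz (mem_subtree_of_par hc1
          (mem_subtree_of_par hvp mem_subtree_self)), fun he => hvnc (he ▸ hz)⟩
      obtain ⟨hpn, w, hwc, hadj⟩ := hc2
      have hreach : reachIn G (subtree par c) w u :=
        reachIn.trans (reachIn.symm (hg.conn hconn hwc)) (hg.conn hconn hzc)
      exact Relation.ReflTransGen.head ⟨hpmem, hsub hwc, hadj⟩ (reachIn.mono hsub hreach)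
  · intro u hu
    apply (mem_subtree_rotate_p_iff hg hvp).mpr
    induction hu with
    | refl => exact Or.inl ⟨mem_subtree_self, hg.par_not_mem_subtree hvp⟩
    | tail hreach hstep ih =>
      rename_i c₀ u
      obtain ⟨hc₀S, huS, hadj⟩ := hstep
      by_contra hnot
      have huTv : u ∈ subtree par v := by
        by_contra h
        exact hnot (Or.inl ⟨huS.1, h⟩)
      have hunv : u ≠ v := fun h => huS.2 h
      obtain ⟨c'', hc''v, huc''⟩ := GoodPar.children_cover huTv hunv
      have hnm : p ∉ bdry G par c'' := fun hb =>
        hnot (Or.inr ⟨c'', hc''v, hb, huc''⟩)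
      have hc₀n : c₀ ∉ subtree par c'' := by
        rcases ih with ⟨h1, h2⟩ | ⟨c₀', h1', h2', hz'⟩
        · exact fun h => h2 (subtree_trans h (mem_subtree_of_par hc''v mem_subtree_self))
        · have hne : c₀' ≠ c'' := fun h => hnm (h ▸ h2')
          exact hg.sibling_disjoint h1' hc''v hne hz'
      have hb : c₀ ∈ bdry G par c'' := ⟨hc₀n, u, huc'', hadj⟩
      rcases hg.bdry_mono hc''v hb with h | h
      · exact hc₀S.2 h
      · rcases hg.bdry_mono hvp h with h' | h'
        · exact hnm (h' ▸ hb)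
        · exact h'.1 hc₀S.1

/-- rotation preserves the structural facts, when `p` is not the root. -/
lemma good_rotate (hpr : p ≠ r) : GoodPar G (rotate G par v p) r := by
  have hvne := vne hg hvp
  have hrv : r ≠ v := by
    intro h
    rw [← h, hg.root_none] at hvp
    exact Option.some_ne_none _ hvp.symm
  have hrp : r ≠ p := Ne.symm hpr
  have hrnm : ¬(par r = some v ∧ p ∈ bdry G par r) := by
    rintro ⟨h1, _⟩
    rw [hg.root_none] at h1
    exact Option.some_ne_none _ h1.symm
  refine ⟨?_, ?_, ?_⟩
  · rw [rotate_other hrv hrp hrnm]; exact hg.root_none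
  · rw [subtree_rotate_other hg hvp hrv hrp]; exact hg.sub_root
  · intro x y hxy
    by_cases hxv : x = v
    · rw [hxv] at hxy ⊢
      rw [rotate_v] at hxy
      have hyv : y ≠ v := fun h => par_p_ne hg hvp (h ▸ hxy)
      have hyp : y ≠ p := fun h => hg.no_self (h ▸ hxy)
      rw [subtree_rotate_v_eq hg hvp, subtree_rotate_other hg hvp hyv hyp,
        hg.sub_eq hxy]
      apply compIn_eq_of_mem
      rw [← hg.sub_eq hxy]
      exact mem_subtree_of_par hvp mem_subtree_self
    · by_cases hxp : x = p
      · rw [hxp] at hxy ⊢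
        rw [rotate_p hvne.symm] at hxy
        have hyv : y = v := by injection hxy.symm
        rw [hyv, subtree_rotate_v_eq hg hvp]
        exact subtree_rotate_p_eq_comp hg hvp hconn
      · by_cases hmv : par x = some v ∧ p ∈ bdry G par x
        · rw [rotate_moved hxv hxp hmv] at hxy
          have hyp : y = p := by injection hxy.symm
          rw [hyp, subtree_rotate_other hg hvp hxv hxp]
          apply Set.eq_of_subset_of_subset
          · intro z hz
            have hsub : subtree par x ⊆ subtree (rotate G par v p) p \ {p} := by
              intro w hw
              exact ⟨(mem_subtree_rotate_p_iff hg hvp).mpr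
                (Or.inr ⟨x, hmv.1, hmv.2, hw⟩), fun he => hmv.2.1 (he ▸ hw)⟩
            exact reachIn.mono hsub (hg.conn hconn hz)
          · intro u hu
            induction hu with
            | refl => exact mem_subtree_self
            | tail hreach hstep ih =>
              rename_i c₀ u
              obtain ⟨hc₀S, huA, hadj⟩ := hstep
              by_contra hun
              have hb : u ∈ bdry G par x := ⟨hun, c₀, ih, hadj.symm⟩
              rcases hg.bdry_mono hmv.1 hb with h | h
              · exact (v_not_mem_subtree_rotate_p hg hvp) (h ▸ huA.1)
              · rcases hg.bdry_mono hvp h with h' | h'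
                · exact huA.2 h'
                · exact h'.1 (subtree_rotate_p_subset hg hvp huA.1)
        · have hxy' : par x = some y := by rw [← rotate_other hxv hxp hmv]; exact hxy
          rw [subtree_rotate_other hg hvp hxv hxp]
          by_cases hyv : y = v
          · rw [hyv] at hxy' ⊢
            have hpb : p ∉ bdry G par x := fun hb => hmv ⟨hxy', hb⟩
            have hvnx : v ∉ subtree par x := hg.par_not_mem_subtree hxy'
            rw [subtree_rotate_v_eq hg hvp]
            apply Set.eq_of_subset_of_subset
            · intro z hz
              have hsub : subtree par x ⊆ subtree par p \ {v} := by
                intro w hw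
                refine ⟨subtree_trans hw (subtree_trans
                  (mem_subtree_of_par hxy' mem_subtree_self)
                  (mem_subtree_of_par hvp mem_subtree_self)), ?_⟩
                exact fun he => hvnx (he ▸ hw)
              exact reachIn.mono hsub (hg.conn hconn hz)
            · intro u hu
              induction hu with
              | refl => exact mem_subtree_self
              | tail hreach hstep ih =>
                rename_i c₀ u
                obtain ⟨hc₀S, huS, hadj⟩ := hstep
                by_contra hun
                have hb : u ∈ bdry G par x := ⟨hun, c₀, ih, hadj.symm⟩
                rcases hg.bdry_mono hxy' hb with h | h
                · exact huS.2 h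
                · rcases hg.bdry_mono hvp h with h' | h'
                  · exact hpb (h' ▸ hb)
                  · exact h'.1 huS.1
          · by_cases hyp : y = p
            · rw [hyp] at hxy' ⊢
              apply Set.eq_of_subset_of_subset
              · intro z hz
                have hsub : subtree par x ⊆ subtree (rotate G par v p) p \ {p} := by
                  intro w hw
                  refine ⟨(mem_subtree_rotate_p_iff hg hvp).mpr (Or.inl
                    ⟨subtree_trans hw (mem_subtree_of_par hxy' mem_subtree_self),
                     hg.sibling_disjoint hxy' hvp hxv hw⟩), ?_⟩
                  exact fun he => (hg.par_not_mem_subtree hxy') (he ▸ hw)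
                exact reachIn.mono hsub (hg.conn hconn hz)
              · intro u hu
                induction hu with
                | refl => exact mem_subtree_self
                | tail hreach hstep ih =>
                  rename_i c₀ u
                  obtain ⟨hc₀S, huA, hadj⟩ := hstep
                  by_contra hun
                  have hb : u ∈ bdry G par x := ⟨hun, c₀, ih, hadj.symm⟩
                  rcases hg.bdry_mono hxy' hb with h | h
                  · exact huA.2 h
                  · exact h.1 (subtree_rotate_p_subset hg hvp huA.1)
            · rw [subtree_rotate_other hg hvp hyv hyp]
              exact hg.sub_eq hxy'

end RotSec3

section BdrySec

variable {G : SimpleGraph V} {par : V → Option V} {r v p : V}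

lemma bdry_eq_of_subtree_eq {par₁ par₂ : V → Option V} {x₁ x₂ : V}
    (h : subtree par₁ x₁ = subtree par₂ x₂) : bdry G par₁ x₁ = bdry G par₂ x₂ := by
  unfold bdry; rw [h]

lemma reachIn_walk {S : Set V} {a b : V} (h : reachIn G S a b) (ha : a ∈ S) :
    ∃ w : G.Walk a b, ∀ z ∈ w.support, z ∈ S := by
  induction h with
  | refl => exact ⟨SimpleGraph.Walk.nil, by simpa using ha⟩
  | tail hreach hstep ih =>
      rename_i bmid c
      obtain ⟨w, hw⟩ := ih
      refine ⟨w.concat hstep.2.2, ?_⟩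
      intro z hz
      rw [SimpleGraph.Walk.support_concat] at hz
      have hzc : z ∈ w.support ∨ z = c := by simpa using hz
      rcases hzc with h' | h'
      · exact hw z h'
      · exact h' ▸ hstep.2.1

/-- in an acyclic graph, a vertex outside a connected set has
at most one neighbour inside it -/
lemma unique_nbr (hac : G.IsAcyclic) {S : Set V} {x a b : V} (hx : x ∉ S)
    (ha : a ∈ S) (hadja : G.Adj x a) (hadjb : G.Adj x b)
    (hreach : reachIn G S a b) : a = b := by
  classical
  by_contra hne
  obtain ⟨w, hw⟩ := reachIn_walk hreach ha
  have hsupp : ∀ z ∈ (w.toPath : G.Walk a b).support, z ∈ S := fun z hz =>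
    hw z (SimpleGraph.Walk.support_toPath_subset w hz)
  have hxns : x ∉ (w.toPath : G.Walk a b).support := fun h => hx (hsupp x h)
  have hpath : (SimpleGraph.Walk.cons hadja (w.toPath : G.Walk a b)).IsPath :=
    (w.toPath.2).cons hxns
  have heq : (⟨_, hpath⟩ : G.Path x b) = SimpleGraph.Path.singleton hadjb :=
    SimpleGraph.isAcyclic_iff_path_unique.mp hac _ _
  have hmem : a ∈ (SimpleGraph.Walk.cons hadja (w.toPath : G.Walk a b)).support := by
    simp [SimpleGraph.Walk.support_cons]
  rw [show (SimpleGraph.Walk.cons hadja (w.toPath : G.Walk a b)) =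
      ((⟨_, hpath⟩ : G.Path x b) : G.Walk x b) from rfl, heq] at hmem
  have hax : a = x ∨ a = b := by
    simpa [SimpleGraph.Path.singleton, SimpleGraph.Walk.support_cons] using hmem
  rcases hax with h | h
  · exact absurd h hadja.ne'
  · exact hne h

variable (hg : GoodPar G par r) (hvp : par v = some p)
include hg hvp

/-- the boundary of the new subtree of `p` is contained in the old one plus `v` -/
lemma bdry_rotate_p_subset :
    bdry G (rotate G par v p) p ⊆ insert v (bdry G par p) := by
  rintro x ⟨hxA, u, huA, hadj⟩
  by_cases hxT : x ∈ subtree par p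
  · left
    by_contra hxv
    have hnot : ¬((x ∈ subtree par p ∧ x ∉ subtree par v) ∨
        ∃ c, par c = some v ∧ p ∈ bdry G par c ∧ x ∈ subtree par c) :=
      fun h => hxA ((mem_subtree_rotate_p_iff hg hvp).mpr h)
    have hxTv : x ∈ subtree par v := by
      by_contra h
      exact hnot (Or.inl ⟨hxT, h⟩)
    obtain ⟨c'', hc''v, hxc''⟩ := GoodPar.children_cover hxTv hxv
    have hnm : p ∉ bdry G par c'' := fun hb => hnot (Or.inr ⟨c'', hc''v, hb, hxc''⟩)
    rcases (mem_subtree_rotate_p_iff hg hvp).mp huA with ⟨hu1, hu2⟩ | ⟨c, hc1, hc2, huc⟩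
    · have hunc : u ∉ subtree par c'' := fun h =>
        hu2 (subtree_trans h (mem_subtree_of_par hc''v mem_subtree_self))
      have hb : u ∈ bdry G par c'' := ⟨hunc, x, hxc'', hadj.symm⟩
      rcases hg.bdry_mono hc''v hb with h | h
      · exact hu2 (h ▸ mem_subtree_self)
      · rcases hg.bdry_mono hvp h with h' | h'
        · exact hnm (h' ▸ hb)
        · exact h'.1 hu1
    · have hxnc : x ∉ subtree par c := fun h => hnot (Or.inr ⟨c, hc1, hc2, h⟩)
      have hb : x ∈ bdry G par c := ⟨hxnc, u, huc, hadj⟩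
      rcases hg.bdry_mono hc1 hb with h | h
      · exact hxv h
      · exact h.1 hxTv
  · exact Set.mem_insert_of_mem _ ⟨hxT, u, subtree_rotate_p_subset hg hvp huA, hadj⟩

variable (hconn : G.Preconnected)
include hconn

/-- a common boundary vertex of `T_v` and `T_p` is not in the boundary of the
new subtree of `p` -/
lemma sep_not_in_bdry_rotate_p [Fintype V] (hac : G.IsAcyclic) {z : V}
    (hzp : z ∈ bdry G par p) (hzv : z ∈ bdry G par v)
    (hch : ∀ c, par c = some v → (bdry G par c).ncard ≤ 2) :
    z ∉ bdry G (rotate G par v p) p := by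
  rintro ⟨hzA, u, huA, hadj⟩
  obtain ⟨hznv, u', hu'v, hadj'⟩ := hzv
  have hvTp : v ∈ subtree par p := mem_subtree_of_par hvp mem_subtree_self
  have hu'Tp : u' ∈ subtree par p := subtree_trans hu'v hvTp
  have huTp : u ∈ subtree par p := subtree_rotate_p_subset hg hvp huA
  have hreach : reachIn G (subtree par p) u u' :=
    reachIn.trans (reachIn.symm (hg.conn hconn huTp)) (hg.conn hconn hu'Tp)
  have huu' : u = u' := unique_nbr hac hzp.1 huTp hadj hadj' hreach
  rw [← huu'] at hu'v
  rcases (mem_subtree_rotate_p_iff hg hvp).mp huA with ⟨_, h2⟩ | ⟨c, hc1, hc2, huc⟩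
  · exact h2 hu'v
  · have hTcTp : subtree par c ⊆ subtree par p := fun w hw =>
      subtree_trans hw (mem_subtree_of_par hc1 hvTp)
    have hzb : z ∈ bdry G par c := ⟨fun h => hzp.1 (hTcTp h), u, huc, hadj⟩
    have hvb : v ∈ bdry G par c := hg.par_mem_bdry hconn hc1
    have hvz : v ≠ z := fun h => hzp.1 (h ▸ hvTp)
    have hpz : p ≠ z := fun h => hzp.1 (h ▸ mem_subtree_self)
    have hvpne := vne hg hvp
    have hsub : ({v, p, z} : Set V) ⊆ bdry G par c := by
      rintro w (h | h | h)
      · exact h ▸ hvb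
      · exact h ▸ hc2
      · exact h ▸ hzb
    have h3 : ({v, p, z} : Set V).ncard = 3 := by
      rw [Set.ncard_insert_of_notMem (by simp [hvpne, hvz]),
        Set.ncard_insert_of_notMem (by simp [hpz]), Set.ncard_singleton]
    have := Set.ncard_le_ncard hsub (Set.toFinite _)
    rw [h3] at this
    exact absurd (this.trans (hch c hc1)) (by norm_num)

/-- ZIG-ZAG first-rotation bound: when `v` is a separator,
the new boundary of `p` has size at most 2. -/
lemma bdry_rotate_p_ncard_le [Fintype V] (hac : G.IsAcyclic)
    (hsv : (bdry G par v).ncard = 2) (hbp : (bdry G par p).ncard ≤ 2)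
    (hch : ∀ c, par c = some v → (bdry G par c).ncard ≤ 2) :
    (bdry G (rotate G par v p) p).ncard ≤ 2 := by
  have hpb : p ∈ bdry G par v := hg.par_mem_bdry hconn hvp
  have hz : ∃ z ∈ bdry G par v, z ≠ p := by
    by_contra h
    push_neg at h
    have hsub : bdry G par v ⊆ {p} := fun z hz => h z hz
    have := Set.ncard_le_ncard hsub (Set.toFinite _)
    rw [Set.ncard_singleton, hsv] at this
    omega
  obtain ⟨z, hz1, hz2⟩ := hz
  have hzp : z ∈ bdry G par p := by
    rcases hg.bdry_mono hvp hz1 with h | h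
    · exact absurd h hz2
    · exact h
  have hzn := sep_not_in_bdry_rotate_p hg hvp hconn hac hzp hz1 hch
  have hsub : bdry G (rotate G par v p) p ⊆ insert v (bdry G par p \ {z}) := by
    intro w hw
    rcases bdry_rotate_p_subset hg hvp hw with h | h
    · exact h ▸ Set.mem_insert _ _
    · exact Set.mem_insert_of_mem _ ⟨h, fun he => hzn (he ▸ hw)⟩
  have h1 := Set.ncard_le_ncard hsub (Set.toFinite _)
  have h2 := Set.ncard_insert_le v (bdry G par p \ {z})
  have h3 := Set.ncard_diff_singleton_lt_of_mem hzp (Set.toFinite _)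
  omega

end BdrySec

section TwoCutSec

variable {G : SimpleGraph V} {par : V → Option V} {r v p g : V}

lemma bdry_root {r : V} (hg : GoodPar G par r) : bdry G par r = ∅ := by
  ext x
  simp only [bdry, Set.mem_setOf_eq, hg.sub_root, Set.mem_univ, not_true_eq_false,
    false_and, Set.mem_empty_iff_false]

variable (hg : GoodPar G par r) (hvp : par v = some p)
include hg hvp

lemma rotate_children {c : V} (h : rotate G par v p c = some v) :
    c = p ∨ (par c = some v ∧ c ≠ v ∧ c ≠ p) := by
  by_cases hcv : c = v
  · exfalso
    rw [hcv, rotate_v] at h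
    exact par_p_ne hg hvp h
  · by_cases hcp : c = p
    · exact Or.inl hcp
    · by_cases hmv : par c = some v ∧ p ∈ bdry G par c
      · rw [rotate_moved hcv hcp hmv] at h
        exact absurd (Option.some_inj.mp h) (vne hg hvp).symm
      · rw [rotate_other hcv hcp hmv] at h
        exact Or.inr ⟨h, hcv, hcp⟩

variable (hconn : G.Preconnected)
include hconn

/-- ZIG: rotation at a vertex whose parent has boundary of size ≤ 1
preserves the 2-cut property. -/
lemma twoCut_zig [Fintype V] (h2 : TwoCut G par)
    (hbp : (bdry G par p).ncard ≤ 1) : TwoCut G (rotate G par v p) := by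
  intro x
  by_cases hxv : x = v
  · rw [hxv, bdry_eq_of_subtree_eq (subtree_rotate_v_eq hg hvp)]
    exact h2 p
  · by_cases hxp : x = p
    · rw [hxp]
      have h1 := Set.ncard_le_ncard (bdry_rotate_p_subset hg hvp) (Set.toFinite _)
      have h2' := Set.ncard_insert_le v (bdry G par p)
      omega
    · rw [bdry_eq_of_subtree_eq (subtree_rotate_other hg hvp hxv hxp)]
      exact h2 x

/-- ZIG-ZAG at a separator `v` preserves the 2-cut property provided `p` is a
separator or `g` is not one. -/
lemma twoCut_zigzag [Fintype V] (hac : G.IsAcyclic) (hpg : par p = some g)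
    (h2 : TwoCut G par) (hsv : (bdry G par v).ncard = 2)
    (hside : (bdry G par g).ncard ≤ 1 ∨ (bdry G par p).ncard = 2) :
    TwoCut G (rotate G (rotate G par v p) v g) := by
  have hvne := vne hg hvp
  have hpr : p ≠ r := fun h => by
    rw [h, hg.root_none] at hpg; exact Option.some_ne_none _ hpg.symm
  have hg1 : GoodPar G (rotate G par v p) r := good_rotate hg hvp hconn hpr
  have h1vg : rotate G par v p v = some g := by rw [rotate_v]; exact hpg
  have hgv : g ≠ v := fun h => hg1.no_self (h ▸ h1vg)
  have hgp : g ≠ p := fun h => hg.no_self (h ▸ hpg)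
  have hB1 : (bdry G (rotate G par v p) p).ncard ≤ 2 :=
    bdry_rotate_p_ncard_le hg hvp hconn hac hsv (h2 p) (fun c _ => h2 c)
  have hch1 : ∀ c, rotate G par v p c = some v →
      (bdry G (rotate G par v p) c).ncard ≤ 2 := by
    intro c hc
    rcases rotate_children hg hvp hc with h | ⟨h1, h2', h3⟩
    · rw [h]; exact hB1
    · rw [bdry_eq_of_subtree_eq (subtree_rotate_other hg hvp h2' h3)]
      exact h2 c
  have hbg1 : bdry G (rotate G par v p) g = bdry G par g :=
    bdry_eq_of_subtree_eq (subtree_rotate_other hg hvp hgv hgp)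
  have hbv1 : bdry G (rotate G par v p) v = bdry G par p :=
    bdry_eq_of_subtree_eq (subtree_rotate_v_eq hg hvp)
  intro x
  by_cases hxv : x = v
  · rw [hxv, bdry_eq_of_subtree_eq (subtree_rotate_v_eq hg1 h1vg), hbg1]
    exact h2 g
  · by_cases hxg : x = g
    · rw [hxg]
      rcases hside with hside | hside
      · have hs := Set.ncard_le_ncard (bdry_rotate_p_subset hg1 h1vg) (Set.toFinite _)
        rw [hbg1] at hs
        have := Set.ncard_insert_le v (bdry G par g)
        omega
      · -- find common boundary vertex of T_p and T_g
        have hgb : g ∈ bdry G par p := hg.par_mem_bdry hconn hpg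
        have hz : ∃ z ∈ bdry G par p, z ≠ g := by
          by_contra h
          push_neg at h
          have hsub : bdry G par p ⊆ {g} := fun z hz => h z hz
          have := Set.ncard_le_ncard hsub (Set.toFinite _)
          rw [Set.ncard_singleton, hside] at this
          omega
        obtain ⟨z, hz1, hz2⟩ := hz
        have hzg : z ∈ bdry G par g := by
          rcases hg.bdry_mono hpg hz1 with h | h
          · exact absurd h hz2
          · exact h
        have hzn := sep_not_in_bdry_rotate_p hg1 h1vg hconn hac
          (hbg1 ▸ hzg) (hbv1 ▸ hz1) hch1
        have hsub : bdry G (rotate G (rotate G par v p) v g) g ⊆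
            insert v (bdry G par g \ {z}) := by
          intro w hw
          rcases bdry_rotate_p_subset hg1 h1vg hw with h | h
          · exact h ▸ Set.mem_insert _ _
          · rw [hbg1] at h
            exact Set.mem_insert_of_mem _ ⟨h, fun he => hzn (he ▸ hw)⟩
        have ha := Set.ncard_le_ncard hsub (Set.toFinite _)
        have hb := Set.ncard_insert_le v (bdry G par g \ {z})
        have hc := Set.ncard_diff_singleton_lt_of_mem hzg (Set.toFinite _)
        have hd := h2 g
        omega
    · by_cases hxp : x = p
      · rw [hxp, bdry_eq_of_subtree_eq
          (subtree_rotate_other hg1 h1vg hvne.symm hgp.symm)]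
        exact hB1
      · rw [bdry_eq_of_subtree_eq (subtree_rotate_other hg1 h1vg hxv hxg),
          bdry_eq_of_subtree_eq (subtree_rotate_other hg hvp hxv hxp)]
        exact h2 x

/-- ZIG-ZIG at a non-separator `v` whose grandparent `g` is not a separator
preserves the 2-cut property. -/
lemma twoCut_zigzig [Fintype V] (hpg : par p = some g) (hgr : g ≠ r)
    (h2 : TwoCut G par) (hsg : (bdry G par g).ncard ≤ 1)
    (hsv : (bdry G par v).ncard ≠ 2) :
    TwoCut G (rotate G (rotate G par p g) v p) := by
  have hvne := vne hg hvp
  have hpgne := vne hg hpg  -- p ≠ g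
  have hg1 : GoodPar G (rotate G par p g) r := good_rotate hg hpg hconn hgr
  have hvg : v ≠ g := fun h => par_p_ne hg hpg (h ▸ hvp)
  -- v is not moved by the first rotation since g ∉ ∂(T_v)
  have hbv : bdry G par v ⊆ {p} := by
    intro z hz
    by_contra hzp
    have hp : p ∈ bdry G par v := hg.par_mem_bdry hconn hvp
    have hsub : ({z, p} : Set V) ⊆ bdry G par v := by
      rintro w (h | h)
      · exact h ▸ hz
      · exact h ▸ hp
    have hcard : ({z, p} : Set V).ncard = 2 := by
      rw [Set.ncard_insert_of_notMem (by simpa using hzp), Set.ncard_singleton]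
    have := Set.ncard_le_ncard hsub (Set.toFinite _)
    have h2v := h2 v
    rw [hcard] at this
    interval_cases h : (bdry G par v).ncard <;> omega
  have hnm : ¬(par v = some p ∧ g ∈ bdry G par v) := by
    rintro ⟨_, hgb⟩
    have := hbv hgb
    simp at this
    exact hpgne this.symm
  have h1vp : rotate G par p g v = some p := by
    rw [rotate_other hvne hvg hnm]; exact hvp
  have hbp1 : bdry G (rotate G par p g) p = bdry G par g :=
    bdry_eq_of_subtree_eq (subtree_rotate_v_eq hg hpg)
  have hB1 : (bdry G (rotate G par p g) g).ncard ≤ 2 := by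
    have ha := Set.ncard_le_ncard (bdry_rotate_p_subset hg hpg) (Set.toFinite _)
    have hb := Set.ncard_insert_le p (bdry G par g)
    omega
  intro x
  by_cases hxv : x = v
  · rw [hxv, bdry_eq_of_subtree_eq (subtree_rotate_v_eq hg1 h1vp), hbp1]
    omega
  · by_cases hxp : x = p
    · rw [hxp]
      have ha := Set.ncard_le_ncard (bdry_rotate_p_subset hg1 h1vp) (Set.toFinite _)
      rw [hbp1] at ha
      have hb := Set.ncard_insert_le v (bdry G par g)
      omega
    · by_cases hxg : x = g
      · rw [hxg, bdry_eq_of_subtree_eq (subtree_rotate_other hg1 h1vp hvg.symm hpgne.symm)]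
        exact hB1
      · rw [bdry_eq_of_subtree_eq (subtree_rotate_other hg1 h1vp hxv hxp),
          bdry_eq_of_subtree_eq (subtree_rotate_other hg hpg hxp hxg)]
        exact h2 x

end TwoCutSec

/-- In a 2-cut STT, if `v` has parent `p` and grandparent `g`, then at
least one of the splay steps at `v`, at `p`, or at `g` preserves the 2-cut property. -/
theorem splayStep_somewhere_allowed [Fintype V] (G : SimpleGraph V)
    (hG : G.IsTree) (par : V → Option V) (r : V) (hroot : par r = none)
    (hT : IsSearchTree G par Set.univ r) (h2 : TwoCut G par)
    (v p g : V) (hvp : par v = some p) (hpg : par p = some g) :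
    TwoCut G (splayStep G par v) ∨ TwoCut G (splayStep G par p) ∨
      TwoCut G (splayStep G par g) := by
  have hg : GoodPar G par r := goodPar_of_isSearchTree hroot hT
  have hconn : G.Preconnected := hG.isConnected.preconnected
  have hac : G.IsAcyclic := hG.IsAcyclic
  cases hgg : par g with
  | none =>
      right; right
      have hstep : splayStep G par g = par := by
        simp only [splayStep, hgg]
      rw [hstep]
      exact h2
  | some gg =>
    cases hggg : par gg with
    | none =>
        right; right
        have hstep : splayStep G par g = rotate G par g gg := by
          simp only [splayStep, hgg, hggg]
        rw [hstep]
        apply twoCut_zig hg hgg hconn h2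
        rw [show gg = r from hg.root_eq hggg, bdry_root hg]
        simp
    | some g3 =>
      have hggr : gg ≠ r := fun h => by
        rw [h, hg.root_none] at hggg; exact Option.some_ne_none _ hggg.symm
      have hgr : g ≠ r := fun h => by
        rw [h, hg.root_none] at hgg; exact Option.some_ne_none _ hgg.symm
      by_cases hsg : (bdry G par g).ncard = 2
      · by_cases hsgg : (bdry G par gg).ncard = 2
        · right; right
          have hstep : splayStep G par g = rotate G (rotate G par g gg) g g3 := by
            simp only [splayStep, hgg, hggg]
            rw [if_pos hsg]
          rw [hstep]
          exact twoCut_zigzag hg hgg hconn hac hggg h2 hsg (Or.inr hsgg)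
        · right; left
          have hsgg1 : (bdry G par gg).ncard ≤ 1 := by
            have := h2 gg; omega
          by_cases hsp : (bdry G par p).ncard = 2
          · have hstep : splayStep G par p = rotate G (rotate G par p g) p gg := by
              simp only [splayStep, hpg, hgg]
              rw [if_pos hsp]
            rw [hstep]
            exact twoCut_zigzag hg hpg hconn hac hgg h2 hsp (Or.inr hsg)
          · have hstep : splayStep G par p = rotate G (rotate G par g gg) p g := by
              simp only [splayStep, hpg, hgg]
              rw [if_neg hsp]
            rw [hstep]
            exact twoCut_zigzig hg hpg hconn hgg hggr h2 hsgg1 hsp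
      · left
        have hsg1 : (bdry G par g).ncard ≤ 1 := by
          have := h2 g; omega
        by_cases hsv : (bdry G par v).ncard = 2
        · have hstep : splayStep G par v = rotate G (rotate G par v p) v g := by
            simp only [splayStep, hvp, hpg]
            rw [if_pos hsv]
          rw [hstep]
          exact twoCut_zigzag hg hvp hconn hac hpg h2 hsv (Or.inl hsg1)
        · have hstep : splayStep G par v = rotate G (rotate G par p g) v p := by
            simp only [splayStep, hvp, hpg]
            rw [if_neg hsv]
          rw [hstep]
          exact twoCut_zigzig hg hvp hconn hpg hgr h2 hsg1 hsv
end

section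
/- Let T be a 2-cut STT on a tree G, let v be a node with parent p and grandparent g. Then g does not lie strictly between v and p on the path in G containing v, p, g; that is, either v lies between p and g, or p lies between v and g (or two of them coincide as endpoints). -/
open SimpleGraph

variable {V : Type*}

lemma reachIn_mono {G : SimpleGraph V} {S T : Set V} (hST : S ⊆ T) {a b : V}
    (h : reachIn G S a b) : reachIn G T a b :=
  by
  induction h with
  | refl => exact Relation.ReflTransGen.refl
  | tail _ hxy ih => exact Relation.ReflTransGen.tail ih ⟨hST hxy.1, hST hxy.2.1, hxy.2.2⟩

lemma reachIn_mem {G : SimpleGraph V} {S : Set V} {a b : V} (ha : a ∈ S)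
    (h : reachIn G S a b) : b ∈ S := by
  induction h with
  | refl => exact ha
  | tail _ hstep _ => exact hstep.2.1

lemma depthReach {G : SimpleGraph V} {par : V → Option V} {S : Set V} {r : V}
    (hT : IsSearchTree G par S r) :
    ∀ x ∈ S, Relation.ReflTransGen (fun a b => par a = some b) x r := by
  induction hT with
  | node S r ρ hr hρ h ih =>
    intro x hx
    by_cases hxr : x = r
    · subst hxr; exact .refl
    · have hc : x ∈ compIn G (S \ {r}) x := Relation.ReflTransGen.refl
      exact (ih x hx hxr x hc).tail (hρ x hx hxr)

lemma parentMem {G : SimpleGraph V} {par : V → Option V} {S : Set V} {r : V}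
    (hT : IsSearchTree G par S r) :
    ∀ x ∈ S, x ≠ r → ∀ y, par x = some y → y ∈ S := by
  induction hT with
  | node S r ρ hr hρ h ih =>
    intro x hx hxr y hxy
    by_cases hroot : x = ρ x
    · have hpr := hρ x hx hxr
      rw [← hroot, hxy] at hpr
      rw [Option.some.injEq] at hpr
      rw [hpr]; exact hr
    · have hc : x ∈ compIn G (S \ {r}) x := Relation.ReflTransGen.refl
      have hy : y ∈ compIn G (S \ {r}) x := ih x hx hxr x hc hroot y hxy
      exact (reachIn_mem (S := S \ {r}) (a := x) ⟨hx, hxr⟩ hy).1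

lemma rnk_mono {par : V → Option V} (rnk : V → ℕ)
    (hrnk : ∀ a b, par a = some b → rnk b < rnk a) {a b : V}
    (h : Relation.ReflTransGen (fun x y => par x = some y) a b) : rnk b ≤ rnk a := by
  induction h with
  | refl => exact le_rfl
  | tail _ hstep ih => exact le_trans (le_of_lt (hrnk _ _ hstep)) ih

lemma mainReach {G : SimpleGraph V} {par : V → Option V} (rnk : V → ℕ)
    (hrnk : ∀ a b, par a = some b → rnk b < rnk a) {S : Set V} {r : V}
    (hT : IsSearchTree G par S r) :
    ∀ v p g : V, v ∈ S → g ∈ S → par v = some p → par p = some g →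
      reachIn G (S \ {g}) v p := by
  induction hT with
  | node S r ρ hr hρ h ih =>
    intro v p g hv hg hvp hpg
    have hpv : rnk p < rnk v := hrnk _ _ hvp
    have hgp : rnk g < rnk p := hrnk _ _ hpg
    have hpg' : p ≠ g := by
      intro e; rw [e] at hgp; exact lt_irrefl _ hgp
    by_cases hrg : r = g
    · subst hrg
      have hvr : v ≠ r := by
        intro e; rw [e] at hpv; exact lt_irrefl _ (hgp.trans hpv)
      have hcv : v ∈ compIn G (S \ {r}) v := Relation.ReflTransGen.refl
      have hvρ : v ≠ ρ v := by
        intro e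
        have hpr := hρ v hv hvr
        rw [← e, hvp, Option.some.injEq] at hpr
        exact hpg' hpr
      exact parentMem (h v hv hvr) v hcv hvρ p hvp
    · have hgr : Relation.ReflTransGen (fun a b => par a = some b) g r :=
        depthReach (IsSearchTree.node S r ρ hr hρ h) g hg
      have hrle : rnk r ≤ rnk g := rnk_mono rnk hrnk hgr
      have hvr : v ≠ r := by
        intro e; rw [e] at hpv
        exact absurd (hrle.trans_lt (hgp.trans hpv)) (lt_irrefl _)
      have hpr : p ≠ r := by
        intro e; rw [e] at hgp
        exact absurd (hrle.trans_lt hgp) (lt_irrefl _)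
      have hcv : v ∈ compIn G (S \ {r}) v := Relation.ReflTransGen.refl
      have hvρ : v ≠ ρ v := by
        intro e
        have h' := hρ v hv hvr
        rw [← e, hvp, Option.some.injEq] at h'
        exact hpr h'
      have hpC : p ∈ compIn G (S \ {r}) v := parentMem (h v hv hvr) v hcv hvρ p hvp
      have hpρ : p ≠ ρ v := by
        intro e
        have h' := hρ v hv hvr
        rw [← e, hpg, Option.some.injEq] at h'
        exact hrg h'.symm
      have hgC : g ∈ compIn G (S \ {r}) v := parentMem (h v hv hvr) p hpC hpρ g hpg
      have hrec : reachIn G (compIn G (S \ {r}) v \ {g}) v p :=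
        ih v hv hvr v p g hcv hgC hvp hpg
      have hsub : compIn G (S \ {r}) v \ {g} ⊆ S \ {g} := by
        intro x hx
        exact ⟨(reachIn_mem (S := S \ {r}) (a := v) ⟨hv, hvr⟩ hx.1).1, hx.2⟩
      exact reachIn_mono hsub hrec

lemma walkOf {G : SimpleGraph V} {S : Set V} {a b : V} (h : reachIn G S a b) :
    a ∈ S → ∃ w : G.Walk a b, ∀ x ∈ w.support, x ∈ S := by
  induction h using Relation.ReflTransGen.head_induction_on with
  | refl =>
    intro hb
    refine ⟨SimpleGraph.Walk.nil, ?_⟩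
    intro x hx
    simp only [SimpleGraph.Walk.support_nil, List.mem_singleton] at hx
    rw [hx]; exact hb
  | head hstep _ ih =>
    intro _
    obtain ⟨hxS, hy, hadj⟩ := hstep
    obtain ⟨w, hw⟩ := ih hy
    refine ⟨SimpleGraph.Walk.cons hadj w, ?_⟩
    intro x hx
    rw [SimpleGraph.Walk.support_cons, List.mem_cons] at hx
    rcases hx with hx | hx
    · rw [hx]; exact hxS
    · exact hw x hx

/-- In a 2-cut STT on a tree `G`, the grandparent `g` of a node `v` with
parent `p` does not lie strictly between `v` and `p` in `G`: there is a path in `G`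
from `v` to `p` avoiding `g`. -/
theorem grandparent_not_between [Fintype V] (G : SimpleGraph V) (hG : G.IsTree)
    (par : V → Option V) (r : V) (hroot : par r = none)
    (hT : IsSearchTree G par Set.univ r) (h2 : TwoCut G par)
    (v p g : V) (hvp : par v = some p) (hpg : par p = some g) :
    ∃ w : G.Walk v p, w.IsPath ∧ g ∉ w.support := by
  classical
  have hex : ∀ x : V, ∃ n, (fun o : Option V => o.bind par)^[n] (some x) = some r := by
    intro x
    have hx : Relation.ReflTransGen (fun a b => par a = some b) x r :=
      depthReach hT x (Set.mem_univ x)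
    induction hx using Relation.ReflTransGen.head_induction_on with
    | refl => exact ⟨0, rfl⟩
    | head hstep _ ih =>
      obtain ⟨n, hn⟩ := ih
      refine ⟨n + 1, ?_⟩
      rw [Function.iterate_succ_apply]
      simpa [hstep] using hn
  set rnk : V → ℕ := fun x => Nat.find (hex x) with hrnkdef
  have hrnk : ∀ a b, par a = some b → rnk b < rnk a := by
    intro a b hab
    have hspec := Nat.find_spec (hex a)
    have hne : rnk a ≠ 0 := by
      intro h0
      rw [hrnkdef] at h0
      simp only at h0
      rw [h0] at hspec
      simp only [Function.iterate_zero, id_eq, Option.some.injEq] at hspec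
      rw [hspec, hroot] at hab
      cases hab
    obtain ⟨m, hm⟩ := Nat.exists_eq_succ_of_ne_zero hne
    have hm' : (fun o : Option V => o.bind par)^[m] (some b) = some r := by
      have := hspec
      rw [show Nat.find (hex a) = rnk a from rfl, hm, Function.iterate_succ_apply] at this
      simpa [hab] using this
    have hle : rnk b ≤ m := Nat.find_le hm'
    omega
  have hreach : reachIn G (Set.univ \ {g}) v p :=
    mainReach rnk hrnk hT v p g (Set.mem_univ v) (Set.mem_univ g) hvp hpg
  have hvg : v ≠ g := by
    intro e
    have := (hrnk _ _ hpg).trans (hrnk _ _ hvp)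
    rw [e] at this
    exact lt_irrefl _ this
  obtain ⟨w, hw⟩ := walkOf hreach ⟨Set.mem_univ v, hvg⟩
  refine ⟨w.bypass, w.bypass_isPath, ?_⟩
  intro hgmem
  exact (hw g (w.support_bypass_subset hgmem)).2 rfl
end
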